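/- arXiv:1304.3172 — 2 statements merged into one kernel-verified Lean document; each statement's English description precedes it below -/
import Mathlib

section
/- Let m ≥ 2, v : Fin m → ℝ positive and strictly increasing, A, A* : Fin m → ℝ nonnegative with A_m* = A_m, ∑_{j=1}^m v_j A_j > 0, and suppose ∑_{j=1}^{m-1} (A_j* − A_j) prefix inequalities hold: for all i ∈ [1, m-1], ∑_{j=i}^{m-1}(A_j* − A_j) ≤ ∑_{j=i+1}^m A_j. Let r = max_{1≤i≤m-1} v_i/v_{i+1}. Then (∑_{j=1}^m v_j A_j*) / (∑_{j=1}^m v_j A_j) ≤ 1 + r. -/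
open Finset

theorem stmt_2 (m : ℕ) (hm : 2 ≤ m) (v A Astar : ℕ → ℝ)
    (hv : ∀ i ∈ Icc 1 m, 0 < v i)
    (hmono : ∀ i ∈ Icc 1 (m - 1), v i < v (i + 1))
    (hA : ∀ i ∈ Icc 1 m, 0 ≤ A i)
    (hAstar : ∀ i ∈ Icc 1 m, 0 ≤ Astar i)
    (hlast : Astar m = A m)
    (hpos : 0 < ∑ j ∈ Icc 1 m, v j * A j)
    (hsuffix : ∀ i ∈ Icc 1 (m - 1),
      ∑ j ∈ Icc i (m - 1), (Astar j - A j) ≤ ∑ j ∈ Icc (i + 1) m, A j)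
    (hne : (Icc 1 (m - 1)).Nonempty)
    (r : ℝ) (hr : r = (Icc 1 (m - 1)).sup' hne (fun i => v i / v (i + 1))) :
    (∑ j ∈ Icc 1 m, v j * Astar j) / (∑ j ∈ Icc 1 m, v j * A j) ≤ 1 + r := by
  set u : ℕ → ℝ := fun i => if i = 0 then 0 else v i with hu
  set w : ℕ → ℝ := fun i => u i - u (i - 1) with hw
  -- telescoping
  have tel : ∀ j : ℕ, ∑ i ∈ Icc 1 j, w i = u j := by
    intro j
    induction j with
    | zero => simp [hu]
    | succ n ih =>
      rw [Finset.sum_Icc_succ_top (by omega : 1 ≤ n + 1), ih]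
      simp [hw]
  have hvu : ∀ j : ℕ, 1 ≤ j → u j = v j := by
    intro j hj; simp [hu, Nat.one_le_iff_ne_zero.mp hj]
  -- r is nonnegative
  have hr0 : 0 ≤ r := by
    obtain ⟨i0, hi0⟩ := hne
    have h1 : (0:ℝ) ≤ v i0 / v (i0 + 1) := by
      have hi0' := Finset.mem_Icc.mp hi0
      have := hv i0 (Finset.mem_Icc.mpr ⟨hi0'.1, by omega⟩)
      have := hv (i0 + 1) (Finset.mem_Icc.mpr ⟨by omega, by omega⟩)
      positivity
    exact h1.trans (hr ▸ Finset.le_sup' (fun i => v i / v (i + 1)) hi0)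
  -- w is nonneg on Icc 1 m
  have hw0 : ∀ i ∈ Icc 1 m, 0 ≤ w i := by
    intro i hi
    have hi' := Finset.mem_Icc.mp hi
    rcases Nat.eq_or_lt_of_le hi'.1 with h1 | h1
    · have := hv 1 (Finset.mem_Icc.mpr ⟨le_refl 1, by omega⟩)
      simp [hw, hu, ← h1]; linarith
    · have hmem : i - 1 ∈ Icc 1 (m - 1) := Finset.mem_Icc.mpr ⟨by omega, by omega⟩
      have := hmono (i - 1) hmem
      rw [(by omega : i - 1 + 1 = i)] at this
      have e1 : u i = v i := hvu i hi'.1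
      have e2 : u (i - 1) = v (i - 1) := hvu (i - 1) (by omega)
      simp only [hw, e1, e2]
      linarith
  -- Step A: split off the difference
  have stepA : ∑ j ∈ Icc 1 m, v j * Astar j
      = (∑ j ∈ Icc 1 m, v j * A j) + ∑ j ∈ Icc 1 (m - 1), v j * (Astar j - A j) := by
    have key : ∑ j ∈ Icc 1 m, v j * (Astar j - A j)
        = ∑ j ∈ Icc 1 (m - 1), v j * (Astar j - A j) := by
      have hm' : m - 1 + 1 = m := by omega
      rw [← hm', Finset.sum_Icc_succ_top (by omega : 1 ≤ m - 1 + 1), hm']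
      rw [hlast]; ring
    have expand : ∑ j ∈ Icc 1 m, v j * (Astar j - A j)
        = (∑ j ∈ Icc 1 m, v j * Astar j) - ∑ j ∈ Icc 1 m, v j * A j := by
      rw [← Finset.sum_sub_distrib]; apply Finset.sum_congr rfl; intros; ring
    linarith [key, expand]
  -- Step B: Abel summation via double sum swap
  have stepB : ∑ j ∈ Icc 1 (m - 1), v j * (Astar j - A j)
      = ∑ i ∈ Icc 1 (m - 1), w i * ∑ j ∈ Icc i (m - 1), (Astar j - A j) := by
    calc ∑ j ∈ Icc 1 (m - 1), v j * (Astar j - A j)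
        = ∑ j ∈ Icc 1 (m - 1), ∑ i ∈ Icc 1 (m - 1),
            (if i ≤ j then w i * (Astar j - A j) else 0) := by
          apply Finset.sum_congr rfl
          intro j hj
          have hj' := Finset.mem_Icc.mp hj
          have hfil : Icc 1 j = (Icc 1 (m - 1)).filter (fun i => i ≤ j) := by
            ext i; simp only [Finset.mem_Icc, Finset.mem_filter]; omega
          rw [← Finset.sum_filter, ← hfil, ← Finset.sum_mul, tel j, hvu j hj'.1]
      _ = ∑ i ∈ Icc 1 (m - 1), ∑ j ∈ Icc 1 (m - 1),
            (if i ≤ j then w i * (Astar j - A j) else 0) := Finset.sum_comm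
      _ = ∑ i ∈ Icc 1 (m - 1), w i * ∑ j ∈ Icc i (m - 1), (Astar j - A j) := by
          apply Finset.sum_congr rfl
          intro i hi
          have hi' := Finset.mem_Icc.mp hi
          have hfil : Icc i (m - 1) = (Icc 1 (m - 1)).filter (fun j => i ≤ j) := by
            ext j; simp only [Finset.mem_Icc, Finset.mem_filter]; omega
          rw [Finset.mul_sum, hfil, Finset.sum_filter]
  -- Step C: termwise bound using hsuffix
  have stepC : ∑ i ∈ Icc 1 (m - 1), w i * ∑ j ∈ Icc i (m - 1), (Astar j - A j)
      ≤ ∑ i ∈ Icc 1 (m - 1), w i * ∑ j ∈ Icc (i + 1) m, A j := by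
    apply Finset.sum_le_sum
    intro i hi
    have hi' := Finset.mem_Icc.mp hi
    exact mul_le_mul_of_nonneg_left (hsuffix i hi)
      (hw0 i (Finset.mem_Icc.mpr ⟨hi'.1, by omega⟩))
  -- Step D: second swap
  have stepD : ∑ i ∈ Icc 1 (m - 1), w i * ∑ j ∈ Icc (i + 1) m, A j
      = ∑ j ∈ Icc 1 m, u (j - 1) * A j := by
    calc ∑ i ∈ Icc 1 (m - 1), w i * ∑ j ∈ Icc (i + 1) m, A j
        = ∑ i ∈ Icc 1 (m - 1), ∑ j ∈ Icc 1 m,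
            (if i + 1 ≤ j then w i * A j else 0) := by
          apply Finset.sum_congr rfl
          intro i hi
          have hfil : Icc (i + 1) m = (Icc 1 m).filter (fun j => i + 1 ≤ j) := by
            ext j; simp only [Finset.mem_Icc, Finset.mem_filter]; omega
          rw [Finset.mul_sum, hfil, Finset.sum_filter]
      _ = ∑ j ∈ Icc 1 m, ∑ i ∈ Icc 1 (m - 1),
            (if i + 1 ≤ j then w i * A j else 0) := Finset.sum_comm
      _ = ∑ j ∈ Icc 1 m, u (j - 1) * A j := by
          apply Finset.sum_congr rfl
          intro j hj
          have hj' := Finset.mem_Icc.mp hj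
          have hfil : Icc 1 (j - 1) = (Icc 1 (m - 1)).filter (fun i => i + 1 ≤ j) := by
            ext i; simp only [Finset.mem_Icc, Finset.mem_filter]; omega
          rw [← Finset.sum_filter, ← hfil, ← Finset.sum_mul, tel (j - 1)]
  -- Step E: termwise bound by r
  have stepE : ∑ j ∈ Icc 1 m, u (j - 1) * A j ≤ r * ∑ j ∈ Icc 1 m, v j * A j := by
    rw [Finset.mul_sum]
    apply Finset.sum_le_sum
    intro j hj
    have hj' := Finset.mem_Icc.mp hj
    have hAj : 0 ≤ A j := hA j hj
    have hvj : 0 < v j := hv j hj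
    have hub : u (j - 1) ≤ r * v j := by
      rcases Nat.eq_or_lt_of_le hj'.1 with h1 | h1
      · simp only [hu, ← h1]
        simp
        exact mul_nonneg hr0 (hv 1 (Finset.mem_Icc.mpr ⟨le_refl 1, by omega⟩)).le
      · have hmem : j - 1 ∈ Icc 1 (m - 1) := Finset.mem_Icc.mpr ⟨by omega, by omega⟩
        have hle : v (j - 1) / v (j - 1 + 1) ≤ r := hr ▸ Finset.le_sup' (fun i => v i / v (i + 1)) hmem
        rw [(by omega : j - 1 + 1 = j)] at hle
        rw [hvu (j - 1) (by omega)]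
        rw [div_le_iff₀ hvj] at hle
        linarith
    calc u (j - 1) * A j ≤ (r * v j) * A j := mul_le_mul_of_nonneg_right hub hAj
      _ = r * (v j * A j) := by ring
  -- Combine
  rw [div_le_iff₀ hpos, stepA]
  have := stepB.le.trans (stepC.trans (stepD.le.trans stepE))
  linarith
end

section
/- Let m ≥ 2, let B : Fin m → ℕ be positive queue capacities, and let v : Fin m → ℝ with 0 < v_1 < ... < v_m. Define GREEDY(σ) = ∑_{j=1}^m B_j v_j and ADV(σ) = B_1 v_1 + ∑_{j=2}^m B_j (v_{j-1} + v_j). Then ADV(σ)/GREEDY(σ) ≤ 1 + r where r = max_{1≤i≤m-1} v_i/v_{i+1}, and ADV(σ)/GREEDY(σ) ≥ 1 + (v_ℓ · B_{ℓ+1}) / (∑_{j=1}^m B_j v_j) for every ℓ ∈ [1, m-1]. -/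
open Finset

theorem stmt_7 (m : ℕ) (hm : 2 ≤ m) (B : ℕ → ℕ) (v : ℕ → ℝ)
    (hB : ∀ j ∈ Icc 1 m, 0 < B j)
    (hv : ∀ i ∈ Icc 1 m, 0 < v i)
    (hmono : ∀ i ∈ Icc 1 (m - 1), v i < v (i + 1))
    (hne : (Icc 1 (m - 1)).Nonempty)
    (r : ℝ) (hr : r = (Icc 1 (m - 1)).sup' hne (fun i => v i / v (i + 1)))
    (GREEDY ADV : ℝ)
    (hGREEDY : GREEDY = ∑ j ∈ Icc 1 m, (B j : ℝ) * v j)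
    (hADV : ADV = (B 1 : ℝ) * v 1 + ∑ j ∈ Icc 2 m, (B j : ℝ) * (v (j - 1) + v j)) :
    ADV / GREEDY ≤ 1 + r ∧
      ∀ ℓ ∈ Icc 1 (m - 1),
        ADV / GREEDY ≥ 1 + (v ℓ * (B (ℓ + 1) : ℝ)) / (∑ j ∈ Icc 1 m, (B j : ℝ) * v j) := by
  -- basic facts
  have h1m : (1 : ℕ) ∈ Icc 1 m := Finset.mem_Icc.mpr ⟨le_refl 1, by omega⟩
  have hGpos : 0 < GREEDY := by
    rw [hGREEDY]
    apply Finset.sum_pos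
    · intro j hj
      exact mul_pos (by exact_mod_cast hB j hj) (hv j hj)
    · exact ⟨1, h1m⟩
  -- decomposition: ADV = GREEDY + E
  set E : ℝ := ∑ j ∈ Icc 2 m, (B j : ℝ) * v (j - 1) with hE
  have hsplit : ADV = GREEDY + E := by
    rw [hADV, hGREEDY, hE]
    have : Icc 1 m = insert 1 (Icc 2 m) := by
      ext x; simp [Finset.mem_insert]; omega
    rw [this, Finset.sum_insert (by simp)]
    have h2 : ∑ j ∈ Icc 2 m, (B j : ℝ) * (v (j - 1) + v j)
        = ∑ j ∈ Icc 2 m, ((B j : ℝ) * v j + (B j : ℝ) * v (j - 1)) := by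
      apply Finset.sum_congr rfl; intro j hj; ring
    rw [h2, Finset.sum_add_distrib]; ring
  -- membership helpers
  have hmem : ∀ j ∈ Icc 2 m, j - 1 ∈ Icc 1 (m - 1) := by
    intro j hj; simp at hj ⊢; omega
  have hmem' : ∀ j ∈ Icc 2 m, j ∈ Icc 1 m := by
    intro j hj; simp at hj ⊢; omega
  have hsub : ∀ i ∈ Icc 1 (m-1), i ∈ Icc 1 m := by
    intro i hi; simp at hi ⊢; omega
  have hsub' : ∀ i ∈ Icc 1 (m-1), i + 1 ∈ Icc 1 m := by
    intro i hi; simp at hi ⊢; omega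
  have hrpos : 0 ≤ r := by
    obtain ⟨i, hi⟩ := hne
    rw [hr]
    refine le_trans ?_ (Finset.le_sup' _ hi)
    exact div_nonneg (le_of_lt (hv i (hsub i hi))) (le_of_lt (hv _ (hsub' i hi)))
  constructor
  · -- upper bound
    rw [hsplit]
    rw [div_le_iff₀ hGpos]
    have hEle : E ≤ r * GREEDY := by
      have h1 : E ≤ ∑ j ∈ Icc 2 m, (B j : ℝ) * (r * v j) := by
        apply Finset.sum_le_sum
        intro j hj
        have hvj := hv j (hmem' j hj)
        have hratio : v (j - 1) / v j ≤ r := by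
          rw [hr]
          have := Finset.le_sup' (fun i => v i / v (i + 1)) (hmem j hj)
          have hj1 : j - 1 + 1 = j := by simp at hj; omega
          rwa [hj1] at this
        have : v (j - 1) ≤ r * v j := by
          rw [div_le_iff₀ hvj] at hratio; linarith
        exact mul_le_mul_of_nonneg_left this (by positivity)
      have h2 : ∑ j ∈ Icc 2 m, (B j : ℝ) * (r * v j) ≤ r * GREEDY := by
        rw [hGREEDY, Finset.mul_sum]
        have : ∑ j ∈ Icc 2 m, (B j : ℝ) * (r * v j)
            = ∑ j ∈ Icc 2 m, r * ((B j : ℝ) * v j) := by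
          apply Finset.sum_congr rfl; intro j hj; ring
        rw [this]
        apply Finset.sum_le_sum_of_subset_of_nonneg
        · intro x hx; exact hmem' x hx
        · intro j hj _
          exact mul_nonneg hrpos (mul_nonneg (by positivity) (le_of_lt (hv j hj)))
      linarith
    linarith
  · -- lower bound
    intro ℓ hℓ
    have hℓ1 : ℓ + 1 ∈ Icc 2 m := by simp at hℓ ⊢; omega
    have hEge : v ℓ * (B (ℓ + 1) : ℝ) ≤ E := by
      have := Finset.single_le_sum
        (f := fun j => (B j : ℝ) * v (j - 1))
        (fun j hj => mul_nonneg (by positivity) (le_of_lt (hv _ (hsub _ (hmem j hj)))))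
        hℓ1
      simpa [mul_comm] using this
    rw [hsplit, ge_iff_le, ← hGREEDY]
    rw [le_div_iff₀ hGpos, add_mul, one_mul, div_mul_cancel₀ _ hGpos.ne']
    linarith
end
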